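/- arXiv:2205.06236 — 2 statements merged into one kernel-verified Lean document; each statement's English description precedes it below -/
import Mathlib

section
/- Sortedness contract for Quicksort: for every list l : List ℤ, is_asorted (qsort l) holds. -/
/-- `is_asorted l` holds iff `l` is sorted in ascending order w.r.t. `≤`. -/
def is_asorted : List ℤ → Prop
  | [] => True
  | [_] => True
  | h₁ :: h₂ :: t => h₁ ≤ h₂ ∧ is_asorted (h₂ :: t)

/-- Quicksort on lists of integers. -/
def qsort : List ℤ → List ℤ
  | [] => []
  | h :: t =>
      qsort (t.filter (fun y => y ≤ h)) ++ h :: qsort (t.filter (fun y => h < y))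
termination_by l => l.length
decreasing_by
  · exact Nat.lt_succ_of_le (by simp only [List.length_unattach]; exact (List.length_filter_le _ _).trans (by simp))
  · exact Nat.lt_succ_of_le (by simp only [List.length_unattach]; exact (List.length_filter_le _ _).trans (by simp))

lemma asorted_iff_chain : ∀ l : List ℤ, is_asorted l ↔ l.Chain' (· ≤ ·)
  | [] => by simp [is_asorted, List.Chain']
  | [_] => by simp [is_asorted, List.Chain']
  | h₁ :: h₂ :: t => by
    rw [is_asorted, asorted_iff_chain (h₂ :: t), List.Chain', List.Chain', List.isChain_cons_cons]

lemma mem_qsort : ∀ l : List ℤ, ∀ x, x ∈ qsort l → x ∈ l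
  | [], x, h => by simpa [qsort] using h
  | h :: t, x, hx => by
    rw [qsort] at hx
    rcases List.mem_append.1 hx with h1 | h1
    · have := mem_qsort _ _ h1
      simp at this
      simp [this.1]
    · rcases List.mem_cons.1 h1 with rfl | h2
      · simp
      · have := mem_qsort _ _ h2
        simp at this
        simp [this.1]
termination_by l => l.length
decreasing_by
  all_goals exact Nat.lt_succ_of_le (List.length_filter_le _ t)

lemma qsort_pairwise : ∀ l : List ℤ, (qsort l).Pairwise (· ≤ ·)
  | [] => by simp [qsort]
  | h :: t => by
    rw [qsort]
    rw [List.pairwise_append]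
    refine ⟨qsort_pairwise _, ?_, ?_⟩
    · rw [List.pairwise_cons]
      refine ⟨fun a ha => ?_, qsort_pairwise _⟩
      have := mem_qsort _ _ ha
      simp at this
      exact le_of_lt this.2
    · intro a ha b hb
      have ha' := mem_qsort _ _ ha
      simp at ha'
      rcases List.mem_cons.1 hb with rfl | hb'
      · exact ha'.2
      · have hb'' := mem_qsort _ _ hb'
        simp at hb''
        exact le_of_lt (lt_of_le_of_lt ha'.2 hb''.2)
termination_by l => l.length
decreasing_by
  all_goals exact Nat.lt_succ_of_le (List.length_filter_le _ t)

theorem qsort_sorted_contract (l : List ℤ) : is_asorted (qsort l) := by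
  rw [asorted_iff_chain, List.Chain', List.isChain_iff_pairwise]
  exact qsort_pairwise l
end

section
/- Sortedness contract for Treesort: for every list l : List ℤ, is_asorted (treesort l) holds. -/
/-- Binary trees of integers: `node left key right`. -/
inductive ITree : Type
  | leaf : ITree
  | node : ITree → ℤ → ITree → ITree

/-- Insertion into a binary tree, going left on `≤`. -/
def tinsert (x : ℤ) : ITree → ITree
  | .leaf => .node .leaf x .leaf
  | .node l n r => if x ≤ n then .node (tinsert x l) n r else .node l n (tinsert x r)

/-- In-order flattening of a binary tree. -/
def flatten : ITree → List ℤ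
  | .leaf => []
  | .node l n r => flatten l ++ n :: flatten r

/-- Treesort: insert all elements into a binary tree, then flatten it. -/
def treesort (l : List ℤ) : List ℤ := flatten (l.foldr tinsert .leaf)

lemma mem_flatten_tinsert {y x : ℤ} {t : ITree} (h : y ∈ flatten (tinsert x t)) :
    y ∈ flatten t ∨ y = x := by
  induction t with
  | leaf => simp [tinsert, flatten] at h; tauto
  | node l n r ihl ihr =>
    by_cases hx : x ≤ n
    · simp only [tinsert, if_pos hx, flatten, List.mem_append, List.mem_cons] at h ⊢
      rcases h with h | h
      · rcases ihl h with h | h <;> tauto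
      · tauto
    · simp only [tinsert, if_neg hx, flatten, List.mem_append, List.mem_cons] at h ⊢
      rcases h with h | h | h
      · tauto
      · tauto
      · rcases ihr h with h | h <;> tauto

lemma sorted_flatten_tinsert (x : ℤ) (t : ITree) (h : List.Pairwise (· ≤ ·) (flatten t)) :
    List.Pairwise (· ≤ ·) (flatten (tinsert x t)) := by
  induction t with
  | leaf => simp [tinsert, flatten]
  | node l n r ihl ihr =>
    simp only [flatten, List.pairwise_append, List.pairwise_cons] at h
    obtain ⟨hl, ⟨hn, hr⟩, hln⟩ := h
    by_cases hx : x ≤ n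
    · simp only [tinsert, if_pos hx, flatten, List.append_eq, List.pairwise_append, List.pairwise_cons]
      refine ⟨ihl hl, ⟨hn, hr⟩, ?_⟩
      intro a ha b hb
      rcases mem_flatten_tinsert ha with ha | ha
      · exact hln a ha b hb
      · subst ha
        rcases List.mem_cons.mp hb with hb | hb
        · exact hb ▸ hx
        · exact hx.trans (hn b hb)
    · simp only [tinsert, if_neg hx, flatten, List.append_eq, List.pairwise_append, List.pairwise_cons]
      refine ⟨hl, ⟨?_, ihr hr⟩, ?_⟩
      · intro b hb
        rcases mem_flatten_tinsert hb with hb | hb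
        · exact hn b hb
        · exact hb ▸ (le_of_not_ge hx)
      · intro a ha b hb
        rcases List.mem_cons.mp hb with hb | hb
        · exact hb ▸ hln a ha n (List.mem_cons_self)
        · rcases mem_flatten_tinsert hb with hb | hb
          · exact hln a ha b (List.mem_cons_of_mem _ hb)
          · exact hb ▸ ((hln a ha n (List.mem_cons_self)).trans (le_of_not_ge hx))

lemma is_asorted_of_sorted : ∀ {l : List ℤ}, List.Pairwise (· ≤ ·) l → is_asorted l
  | [], _ => trivial
  | [_], _ => trivial
  | a :: b :: t, h => by
    rw [List.pairwise_cons] at h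
    exact ⟨h.1 b (List.mem_cons_self), is_asorted_of_sorted h.2⟩

theorem treesort_sorted_contract (l : List ℤ) : is_asorted (treesort l) := by
  apply is_asorted_of_sorted
  unfold treesort
  induction l with
  | nil => simp [flatten]
  | cons a t ih => exact sorted_flatten_tinsert a _ ih
end
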